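/- Let G be a simple graph with an interval representation, and let P_a and P_b be two distinct paths in a family of mutually induced paths, each having at least one inner vertex. Then the covered intervals I_{P_a} and I_{P_b} are disjoint: I_{P_a} ∩ I_{P_b} = ∅. -/

import Mathlib

open SimpleGraph

variable {V : Type*}

/-- An interval representation of a simple graph: each vertex gets a closed real
interval `[l u, r u]` with `l u < r u`, and two distinct vertices are adjacent
iff their intervals intersect. -/
structure IntervalRep (G : SimpleGraph V) where
  l : V → ℝ
  r : V → ℝ
  lt : ∀ u, l u < r u
  adj_iff : ∀ u v, u ≠ v →
    (G.Adj u v ↔ (Set.Icc (l u) (r u) ∩ Set.Icc (l v) (r v)).Nonempty)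

/-- A path in `G` together with its two end-vertices. -/
structure IndexedPath (G : SimpleGraph V) where
  a : V
  b : V
  walk : G.Walk a b
  isPath : walk.IsPath

namespace IndexedPath

variable {G : SimpleGraph V}

/-- The set of end-vertices of the path. -/
def ends (P : IndexedPath G) : Set V := {P.a, P.b}

/-- `v` is an inner vertex of `P`, i.e. a vertex of `P` other than its ends. -/
def IsInner (P : IndexedPath G) (v : V) : Prop :=
  v ∈ P.walk.support.tail.dropLast

/-- `P` has no inner chords: any edge between two of its vertices is either an
edge of the path itself or the edge between its two end-vertices. -/
def NoInnerChords (P : IndexedPath G) : Prop :=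
  ∀ x y, x ∈ P.walk.support → y ∈ P.walk.support → G.Adj x y →
    s(x, y) ∈ P.walk.edges ∨ s(x, y) = s(P.a, P.b)

/-- `P` joins the vertices `x` and `y`. -/
def Joins (P : IndexedPath G) (x y : V) : Prop :=
  (P.a = x ∧ P.b = y) ∨ (P.a = y ∧ P.b = x)

end IndexedPath

/-- A family of pairwise distinct paths is mutually induced if: (i) each path has
no inner chords; (ii) two distinct paths share only vertices that are ends of both;
(iii) no inner vertex of one path is adjacent to a vertex `v` of another path,
except when `v` is an end-vertex of both paths. -/
def MutuallyInduced {G : SimpleGraph V} {ι : Type*} (P : ι → IndexedPath G) : Prop :=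
  (∀ i j, i ≠ j → P i ≠ P j) ∧
  (∀ i, (P i).NoInnerChords) ∧
  (∀ i j, i ≠ j → ∀ v, v ∈ (P i).walk.support → v ∈ (P j).walk.support →
      v ∈ (P i).ends ∧ v ∈ (P j).ends) ∧
  (∀ i j, i ≠ j → ∀ u v, (P i).IsInner u → v ∈ (P j).walk.support → G.Adj u v →
      v ∈ (P i).ends ∧ v ∈ (P j).ends)

/-- The covered interval of a path: the union of the intervals of its inner vertices. -/
def coveredInterval {G : SimpleGraph V} (ρ : IntervalRep G) (P : IndexedPath G) : Set ℝ :=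
  ⋃ v ∈ {w : V | P.IsInner w}, Set.Icc (ρ.l v) (ρ.r v)

/-- A solution to Requirement Induced Disjoint Paths: `l = r 1 + ... + r k`
mutually induced paths, exactly `r i` of which join `s i` and `t i`. -/
def RIDPSolution {G : SimpleGraph V} (k : ℕ) (s t : Fin k → V) (r : Fin k → ℕ)
    {l : ℕ} (P : Fin l → IndexedPath G) : Prop :=
  l = ∑ i, r i ∧ MutuallyInduced P ∧
    ∀ i, Nat.card {j : Fin l // (P j).Joins (s i) (t i)} = r i


private lemma list_aux3 {α : Type*} (l : List α) (h : l.Nodup) (x : α)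
    (hx : x ∈ l.dropLast) (hne : l ≠ []) : x ≠ l.getLast hne := by
  intro he
  subst he
  have := List.dropLast_append_getLast hne
  rw [← this] at h
  simp [List.nodup_append] at h
  exact h.2 _ hx rfl

private lemma inner_lemma3 {V : Type*} {G : SimpleGraph V} {a b : V} (w : G.Walk a b)
    (hw : w.IsPath) (v : V) (hv : v ∈ w.support.tail.dropLast) :
    v ∈ w.support ∧ v ≠ a ∧ v ≠ b := by
  have hvt : v ∈ w.support.tail := List.mem_of_mem_dropLast hv
  have hvs : v ∈ w.support := List.mem_of_mem_tail hvt
  have hnd : w.support.Nodup := hw.support_nodup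
  refine ⟨hvs, ?_, ?_⟩
  · rw [Walk.support_eq_cons] at hnd
    simp only [List.nodup_cons] at hnd
    intro he; subst he; exact hnd.1 hvt
  · have htne : w.support.tail ≠ [] := by
      intro h; rw [h] at hvt; simp at hvt
    have hndt : w.support.tail.Nodup := hnd.tail
    have := list_aux3 _ hndt v hv htne
    intro he; subst he
    apply this
    have h2 : w.support.tail.getLast htne = w.support.getLast (by simp) :=
      List.getLast_tail _
    rw [h2, w.getLast_support]

/-- the covered intervals of two distinct members of a family of
mutually induced paths, each with at least one inner vertex, are disjoint. -/
theorem statement3 {V : Type*} (G : SimpleGraph V) (ρ : IntervalRep G)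
    {ι : Type*} (P : ι → IndexedPath G) (hMI : MutuallyInduced P)
    (a b : ι) (hab : a ≠ b)
    (ha : ∃ v, (P a).IsInner v) (hb : ∃ v, (P b).IsInner v) :
    coveredInterval ρ (P a) ∩ coveredInterval ρ (P b) = ∅ := by
  ext x
  simp only [Set.mem_inter_iff, Set.mem_empty_iff_false, iff_false, not_and]
  intro hxa hxb
  simp only [coveredInterval, Set.mem_iUnion, Set.mem_setOf_eq] at hxa hxb
  obtain ⟨u, hu, hxu⟩ := hxa
  obtain ⟨v, hv, hxv⟩ := hxb
  have hu' := inner_lemma3 _ (P a).isPath u hu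
  have hv' := inner_lemma3 _ (P b).isPath v hv
  obtain ⟨_, hMI2, hMI3, hMI4⟩ := hMI
  by_cases huv : u = v
  · subst huv
    have := (hMI3 a b hab u hu'.1 hv'.1).1
    rcases this with h | h
    · exact hu'.2.1 h
    · exact hu'.2.2 h
  · have hadj : G.Adj u v := by
      rw [ρ.adj_iff u v huv]
      exact ⟨x, hxu, hxv⟩
    have := (hMI4 a b hab u v hu hv'.1 hadj).2
    rcases this with h | h
    · exact hv'.2.1 h
    · exact hv'.2.2 h
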